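/- The function φ(r) = (1/(24 W))(1/sin⁴ r + 2/sin² r - 4 log sin r) satisfies the ODE φ''(r) - φ'(r)·L(r) = 1/W on (0, π/2), where L(r) = -d/dr [ log(sin⁵ r · cos r) ] and W > 0 is any constant. -/

import Mathlib

open Set Real

/-- `φ(r) = (1/(24W))(1/sin⁴r + 2/sin²r - 4 log sin r)` satisfies
the ODE `φ''(r) - φ'(r)·L(r) = 1/W` on `(0, π/2)`, where
`L(r) = -(d/dr) log(sin⁵ r · cos r)` and `W > 0` is any constant. -/
theorem stmt5 (W : ℝ) (hW : 0 < W)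
    (φ L : ℝ → ℝ)
    (hφ : ∀ r, φ r =
      (1 / (24 * W)) * (1 / Real.sin r ^ 4 + 2 / Real.sin r ^ 2
        - 4 * Real.log (Real.sin r)))
    (hL : ∀ r, L r = -(deriv (fun s => Real.log (Real.sin s ^ 5 * Real.cos s)) r)) :
    ∀ r ∈ Ioo 0 (π / 2),
      deriv (deriv φ) r - deriv φ r * L r = 1 / W := by
  have hφf : φ = fun r => (1 / (24 * W)) * (1 / Real.sin r ^ 4 + 2 / Real.sin r ^ 2
      - 4 * Real.log (Real.sin r)) := funext hφ
  set F' : ℝ → ℝ := fun s => (1/(24*W)) * (-4*Real.cos s/Real.sin s^5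
      - 4*Real.cos s/Real.sin s^3 - 4*Real.cos s/Real.sin s) with hF'
  have key : ∀ s ∈ Ioo 0 (π/2), HasDerivAt φ (F' s) s := by
    intro s hs
    have hsin : 0 < Real.sin s := Real.sin_pos_of_pos_of_lt_pi hs.1
      (lt_trans hs.2 (by linarith [Real.pi_pos]))
    have hsne := hsin.ne'
    have h1 : HasDerivAt (fun x => Real.sin x ^ 4) ((4:ℕ) * Real.sin s ^ 3 * Real.cos s) s :=
      (Real.hasDerivAt_sin s).pow 4
    have h2 : HasDerivAt (fun x => Real.sin x ^ 2) ((2:ℕ) * Real.sin s ^ 1 * Real.cos s) s :=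
      (Real.hasDerivAt_sin s).pow 2
    have h1' := h1.inv (pow_ne_zero 4 hsne)
    have h2' := h2.inv (pow_ne_zero 2 hsne)
    have hlog := (Real.hasDerivAt_sin s).log hsne
    have hcomb := (((h1'.add (h2'.const_mul 2)).sub (hlog.const_mul 4)).const_mul (1/(24*W)))
    refine (hcomb.congr_of_eventuallyEq (Filter.EventuallyEq.of_eq ?_)).congr_deriv ?_
    · rw [hφf]
      funext x
      simp [one_div, div_eq_mul_inv]
    · show (1/(24*W)) * _ = (1/(24*W)) * _
      congr 1
      field_simp
      ring
  have hderiv : ∀ s ∈ Ioo 0 (π/2), deriv φ s = F' s := fun s hs => (key s hs).deriv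
  intro r hr
  have hsin : 0 < Real.sin r := Real.sin_pos_of_pos_of_lt_pi hr.1
    (lt_trans hr.2 (by linarith [Real.pi_pos]))
  have hcos : 0 < Real.cos r := Real.cos_pos_of_mem_Ioo ⟨by linarith [Real.pi_pos, hr.1], hr.2⟩
  have hsne := hsin.ne'
  have hcne := hcos.ne'
  -- second derivative
  have hev : deriv φ =ᶠ[nhds r] F' := by
    filter_upwards [isOpen_Ioo.mem_nhds hr] with s hs using hderiv s hs
  -- derivative of F' at r
  have h5 : HasDerivAt (fun x => Real.sin x ^ 5) ((5:ℕ) * Real.sin r ^ 4 * Real.cos r) r :=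
    (Real.hasDerivAt_sin r).pow 5
  have h3 : HasDerivAt (fun x => Real.sin x ^ 3) ((3:ℕ) * Real.sin r ^ 2 * Real.cos r) r :=
    (Real.hasDerivAt_sin r).pow 3
  have hd1 := (Real.hasDerivAt_cos r).div h5 (pow_ne_zero 5 hsne)
  have hd2 := (Real.hasDerivAt_cos r).div h3 (pow_ne_zero 3 hsne)
  have hd3 := (Real.hasDerivAt_cos r).div (Real.hasDerivAt_sin r) hsne
  have hF'd := ((((hd1.const_mul (-4)).add (hd2.const_mul (-4))).add
      (hd3.const_mul (-4))).const_mul (1/(24*W)))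
  have hF'd2 : HasDerivAt F' ((1/(24*W)) * ((-4) * ((-Real.sin r * Real.sin r ^ 5 - Real.cos r * ((5:ℕ) * Real.sin r ^ 4 * Real.cos r)) / (Real.sin r ^ 5) ^ 2) + (-4) * ((-Real.sin r * Real.sin r ^ 3 - Real.cos r * ((3:ℕ) * Real.sin r ^ 2 * Real.cos r)) / (Real.sin r ^ 3) ^ 2) + (-4) * ((-Real.sin r * Real.sin r - Real.cos r * Real.cos r) / Real.sin r ^ 2))) r := by
    refine hF'd.congr_of_eventuallyEq (Filter.EventuallyEq.of_eq ?_)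
    funext x; rw [hF']; simp only [Pi.add_apply, Pi.div_apply]; ring
  have hdd : deriv (deriv φ) r = deriv F' r := hev.deriv_eq
  rw [hdd, hF'd2.deriv, hderiv r hr, hL]
  -- compute L's inner deriv
  have hp : HasDerivAt (fun s => Real.sin s ^ 5 * Real.cos s)
      ((5:ℕ) * Real.sin r ^ 4 * Real.cos r * Real.cos r + Real.sin r ^ 5 * (-Real.sin r)) r :=
    ((Real.hasDerivAt_sin r).pow 5).mul (Real.hasDerivAt_cos r)
  have hplog := hp.log (mul_ne_zero (pow_ne_zero 5 hsne) hcne)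
  rw [hplog.deriv]
  have hsc : Real.sin r ^ 2 + Real.cos r ^ 2 = 1 := Real.sin_sq_add_cos_sq r
  rw [hF']
  field_simp
  linear_combination ((-8) * Real.sin r ^ 2 + (-16) * Real.sin r ^ 4) * hsc
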